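/- Let V be a finite set partitioned into m disjoint groups V_1, …, V_m, let f : 2^V → ℝ be nonnegative and submodular, let α, β be reals with 0 ≤ α ≤ 1/2 and α ≤ β ≤ 1, and let γ ∈ [0,1]. Suppose A ⊆ V satisfies |A ∩ V_i| ≤ ⌊β·|V_i|⌋ for every i ∈ [m] and f(A) ≥ γ·f(T) for every T ⊆ V satisfying |T ∩ V_i| ≤ ⌊β·|V_i|⌋ for every i. For each group i with |A ∩ V_i| < ⌊α·|V_i|⌋, let B_i be a uniform random subset of V_i ∖ A of size ⌊α·|V_i|⌋ − |A ∩ V_i|, sampled independently across groups, and B_i = ∅ otherwise. Then E[f(A ∪ (⋃_{i∈[m]} B_i))] ≥ (γ/2)·f(S) for every (α,β)-fair set S ⊆ V. -/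
import Mathlib

private lemma submod_union_inter {V : Type*} [DecidableEq V] (f : Finset V → ℝ)
    (hf : ∀ X Y : Finset V, X ⊆ Y → ∀ e ∉ Y, f (insert e Y) - f Y ≤ f (insert e X) - f X) :
    ∀ X Y : Finset V, f (X ∪ Y) + f (X ∩ Y) ≤ f X + f Y := by
  suffices h : ∀ (n : ℕ) (X Y : Finset V), (Y \ X).card = n →
      f (X ∪ Y) + f (X ∩ Y) ≤ f X + f Y by
    intro X Y; exact h _ X Y rfl
  intro n
  induction n with
  | zero =>
    intro X Y hn
    have h : Y ⊆ X := by
      rw [← Finset.sdiff_eq_empty_iff_subset]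
      exact Finset.card_eq_zero.mp hn
    rw [Finset.union_eq_left.mpr h, Finset.inter_eq_right.mpr h]
  | succ n ih =>
    intro X Y hn
    obtain ⟨e, he⟩ : (Y \ X).Nonempty := by rw [← Finset.card_pos, hn]; omega
    have heY : e ∈ Y := (Finset.mem_sdiff.mp he).1
    have heX : e ∉ X := (Finset.mem_sdiff.mp he).2
    have h1 := ih (insert e X) Y ?_
    · have h2 := hf (X ∩ Y) X Finset.inter_subset_left e heX
      have e1 : insert e X ∪ Y = X ∪ Y := by
        rw [Finset.insert_union, Finset.insert_eq_self.mpr (Finset.mem_union_right _ heY)]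
      have e2 : insert e X ∩ Y = insert e (X ∩ Y) := Finset.insert_inter_of_mem heY
      rw [e1, e2] at h1
      linarith
    · rw [Finset.sdiff_insert, Finset.card_erase_of_mem he, hn]; omega


/-- Suppose `A` satisfies the upper-bound constraints and is a
`γ`-approximation among all sets satisfying them.  Augmenting `A` with independent
uniform random backup sets `B i ⊆ V i \ A` of size `⌊α |V i|⌋ - |A ∩ V i|` (natural
subtraction; `B i = ∅` when the lower bound already holds) yields
`E[f(A ∪ ⋃ i, B i)] ≥ (γ/2) * f S` for every `(α,β)`-fair set `S`, when `α ≤ 1/2`. -/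
theorem stmt_7 {V : Type*} [Fintype V] [DecidableEq V]
    (m : ℕ) (Vg : Fin m → Finset V)
    (hdisj : ∀ i j : Fin m, i ≠ j → Disjoint (Vg i) (Vg j))
    (hcover : Finset.univ.biUnion Vg = (Finset.univ : Finset V))
    (f : Finset V → ℝ)
    (hf_nonneg : ∀ S : Finset V, 0 ≤ f S)
    (hf_submod : ∀ X Y : Finset V, X ⊆ Y → ∀ e ∉ Y,
      f (insert e Y) - f Y ≤ f (insert e X) - f X)
    (α β γ : ℝ) (hα0 : 0 ≤ α) (hα : α ≤ 1 / 2) (hαβ : α ≤ β) (hβ1 : β ≤ 1)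
    (hγ0 : 0 ≤ γ) (hγ1 : γ ≤ 1)
    (A : Finset V)
    (hA : ∀ i : Fin m, (A ∩ Vg i).card ≤ ⌊β * ((Vg i).card : ℝ)⌋₊)
    (hApx : ∀ T : Finset V,
      (∀ i : Fin m, (T ∩ Vg i).card ≤ ⌊β * ((Vg i).card : ℝ)⌋₊) → γ * f T ≤ f A)
    (k : Fin m → ℕ)
    (hk : ∀ i : Fin m, k i = ⌊α * ((Vg i).card : ℝ)⌋₊ - (A ∩ Vg i).card)
    (𝒞 : Finset (Fin m → Finset V))
    (h𝒞 : 𝒞 = Fintype.piFinset fun i => (Vg i \ A).powersetCard (k i)) :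
    ∀ S : Finset V,
      (∀ i : Fin m, ⌊α * ((Vg i).card : ℝ)⌋₊ ≤ (S ∩ Vg i).card ∧
        (S ∩ Vg i).card ≤ ⌊β * ((Vg i).card : ℝ)⌋₊) →
      (γ / 2) * f S ≤
        (∑ B ∈ 𝒞, f (A ∪ Finset.univ.biUnion fun i => B i)) / (𝒞.card : ℝ) := by
  intro S hS
  classical
  subst h𝒞
  set 𝒞 : Finset (Fin m → Finset V) :=
    Fintype.piFinset (fun i => (Vg i \ A).powersetCard (k i)) with h𝒞
  -- basic cardinality facts
  have hWcard : ∀ i, (Vg i \ A).card = (Vg i).card - (A ∩ Vg i).card := by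
    intro i
    have h := Finset.card_inter_add_card_sdiff (Vg i) A
    rw [Finset.inter_comm] at h
    omega
  have h2k : ∀ i, k i + k i ≤ (Vg i \ A).card := by
    intro i
    have hfl : 2 * ⌊α * ((Vg i).card : ℝ)⌋₊ ≤ (Vg i).card := by
      have h1 : (⌊α * ((Vg i).card : ℝ)⌋₊ : ℝ) ≤ α * (Vg i).card :=
        Nat.floor_le (mul_nonneg hα0 (Nat.cast_nonneg _))
      have h0 : (0:ℝ) ≤ ((Vg i).card : ℝ) := Nat.cast_nonneg _
      have h2 : α * ((Vg i).card : ℝ) ≤ ((Vg i).card : ℝ) / 2 := by nlinarith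
      have h3 : ((2 * ⌊α * ((Vg i).card : ℝ)⌋₊ : ℕ) : ℝ) ≤ ((Vg i).card : ℝ) := by
        push_cast; linarith
      exact_mod_cast h3
    have ha : (A ∩ Vg i).card ≤ (Vg i).card := Finset.card_le_card Finset.inter_subset_right
    rw [hk i, hWcard i]
    omega
  have h𝒞mem : ∀ B ∈ 𝒞, ∀ i, B i ⊆ Vg i \ A ∧ (B i).card = k i := by
    intro B hB i
    rw [h𝒞, Fintype.mem_piFinset] at hB
    exact Finset.mem_powersetCard.mp (hB i)
  -- the twin family
  set 𝒟 : (Fin m → Finset V) → Finset (Fin m → Finset V) :=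
    fun B => Fintype.piFinset fun i => ((Vg i \ A) \ B i).powersetCard (k i) with h𝒟
  have h𝒟mem : ∀ B B' : Fin m → Finset V,
      B' ∈ 𝒟 B ↔ ∀ i, B' i ⊆ (Vg i \ A) \ B i ∧ (B' i).card = k i := by
    intro B B'
    rw [h𝒟, Fintype.mem_piFinset]
    simp only [Finset.mem_powersetCard]
  set c : ℕ := ∏ i, ((Vg i \ A).card - k i).choose (k i) with hc
  have hcpos : 0 < c := by
    rw [hc]
    apply Finset.prod_pos
    intro i _
    exact Nat.choose_pos (by have := h2k i; omega)
  have hc𝒟 : ∀ B ∈ 𝒞, (𝒟 B).card = c := by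
    intro B hB
    rw [h𝒟, Fintype.card_piFinset, hc]
    apply Finset.prod_congr rfl
    intro i _
    rw [Finset.card_powersetCard,
      Finset.card_sdiff_of_subset (h𝒞mem B hB i).1, (h𝒞mem B hB i).2]
  have h𝒞cardpos : 0 < 𝒞.card := by
    rw [h𝒞, Fintype.card_piFinset]
    apply Finset.prod_pos
    intro i _
    rw [Finset.card_powersetCard]
    exact Nat.choose_pos (by have := h2k i; omega)
  -- swap symmetry
  have hswap : ∀ B B' : Fin m → Finset V, B ∈ 𝒞 → B' ∈ 𝒟 B → B' ∈ 𝒞 ∧ B ∈ 𝒟 B' := by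
    intro B B' hB hB'
    rw [h𝒟mem] at hB'
    constructor
    · rw [h𝒞, Fintype.mem_piFinset]
      intro i
      rw [Finset.mem_powersetCard]
      exact ⟨(hB' i).1.trans Finset.sdiff_subset, (hB' i).2⟩
    · rw [h𝒟mem]
      intro i
      refine ⟨?_, (h𝒞mem B hB i).2⟩
      intro x hx
      rw [Finset.mem_sdiff]
      refine ⟨(h𝒞mem B hB i).1 hx, fun hx' => ?_⟩
      exact (Finset.mem_sdiff.mp ((hB' i).1 hx')).2 hx
  -- the pair inequality
  have hpair : ∀ B ∈ 𝒞, ∀ B' ∈ 𝒟 B,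
      f A ≤ f (A ∪ Finset.univ.biUnion fun i => B i)
          + f (A ∪ Finset.univ.biUnion fun i => B' i) := by
    intro B hB B' hB'
    rw [h𝒟mem] at hB'
    have hdisjU : Disjoint (Finset.univ.biUnion fun i => B i)
        (Finset.univ.biUnion fun i => B' i) := by
      rw [Finset.disjoint_left]
      intro x hx hx'
      obtain ⟨i, _, hxi⟩ := Finset.mem_biUnion.mp hx
      obtain ⟨j, _, hxj⟩ := Finset.mem_biUnion.mp hx'
      by_cases hij : i = j
      · subst hij
        exact (Finset.mem_sdiff.mp ((hB' i).1 hxj)).2 hxi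
      · have hxVi : x ∈ Vg i := (Finset.mem_sdiff.mp ((h𝒞mem B hB i).1 hxi)).1
        have hxVj : x ∈ Vg j :=
          (Finset.mem_sdiff.mp (Finset.sdiff_subset ((hB' j).1 hxj))).1
        exact Finset.disjoint_left.mp (hdisj i j hij) hxVi hxVj
    have hI : (A ∪ Finset.univ.biUnion fun i => B i)
        ∩ (A ∪ Finset.univ.biUnion fun i => B' i) = A := by
      ext x
      simp only [Finset.mem_inter, Finset.mem_union]
      constructor
      · rintro ⟨hx1 | hx1, hx2 | hx2⟩
        · exact hx1
        · exact hx1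
        · exact hx2
        · exact absurd hx2 (Finset.disjoint_left.mp hdisjU hx1)
      · intro h; exact ⟨Or.inl h, Or.inl h⟩
    have := submod_union_inter f hf_submod
      (A ∪ Finset.univ.biUnion fun i => B i)
      (A ∪ Finset.univ.biUnion fun i => B' i)
    rw [hI] at this
    have hnn := hf_nonneg ((A ∪ Finset.univ.biUnion fun i => B i)
      ∪ (A ∪ Finset.univ.biUnion fun i => B' i))
    linarith
  -- symmetry of the double sum
  have hsym : (∑ B ∈ 𝒞, ∑ B' ∈ 𝒟 B, f (A ∪ Finset.univ.biUnion fun i => B' i))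
      = ∑ B ∈ 𝒞, ∑ B' ∈ 𝒟 B, f (A ∪ Finset.univ.biUnion fun i => B i) := by
    rw [Finset.sum_sigma', Finset.sum_sigma']
    refine Finset.sum_nbij' (fun p => ⟨p.2, p.1⟩) (fun p => ⟨p.2, p.1⟩) ?_ ?_ ?_ ?_ ?_
    · intro p hp
      rw [Finset.mem_sigma] at hp
      exact Finset.mem_sigma.mpr (hswap p.1 p.2 hp.1 hp.2)
    · intro p hp
      rw [Finset.mem_sigma] at hp
      exact Finset.mem_sigma.mpr (hswap p.1 p.2 hp.1 hp.2)
    · intro p _; rfl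
    · intro p _; rfl
    · intro p _; rfl
  -- the key counting inequality
  have key : (𝒞.card : ℝ) * ((c : ℝ) * f A)
      ≤ (c : ℝ) * (2 * ∑ B ∈ 𝒞, f (A ∪ Finset.univ.biUnion fun i => B i)) := by
    have h1 : (∑ B ∈ 𝒞, ∑ _B' ∈ 𝒟 B, f A)
        ≤ ∑ B ∈ 𝒞, ∑ B' ∈ 𝒟 B, (f (A ∪ Finset.univ.biUnion fun i => B i)
            + f (A ∪ Finset.univ.biUnion fun i => B' i)) :=
      Finset.sum_le_sum fun B hB => Finset.sum_le_sum fun B' hB' => hpair B hB B' hB'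
    have hL : (∑ B ∈ 𝒞, ∑ _B' ∈ 𝒟 B, f A) = (𝒞.card : ℝ) * ((c : ℝ) * f A) := by
      rw [Finset.sum_congr rfl (fun B hB => ?_), Finset.sum_const, nsmul_eq_mul]
      rw [Finset.sum_const, hc𝒟 B hB, nsmul_eq_mul]
    have hR : (∑ B ∈ 𝒞, ∑ B' ∈ 𝒟 B, (f (A ∪ Finset.univ.biUnion fun i => B i)
            + f (A ∪ Finset.univ.biUnion fun i => B' i)))
        = (c : ℝ) * (2 * ∑ B ∈ 𝒞, f (A ∪ Finset.univ.biUnion fun i => B i)) := by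
      have e1 : ∀ B ∈ 𝒞, (∑ B' ∈ 𝒟 B, (f (A ∪ Finset.univ.biUnion fun i => B i)
            + f (A ∪ Finset.univ.biUnion fun i => B' i)))
          = (c : ℝ) * f (A ∪ Finset.univ.biUnion fun i => B i)
            + ∑ B' ∈ 𝒟 B, f (A ∪ Finset.univ.biUnion fun i => B' i) := by
        intro B hB
        rw [Finset.sum_add_distrib, Finset.sum_const, hc𝒟 B hB, nsmul_eq_mul]
      have e2 : (∑ B ∈ 𝒞, ∑ _B' ∈ 𝒟 B, f (A ∪ Finset.univ.biUnion fun i => B i))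
          = (c : ℝ) * ∑ B ∈ 𝒞, f (A ∪ Finset.univ.biUnion fun i => B i) := by
        rw [Finset.mul_sum]
        refine Finset.sum_congr rfl fun B hB => ?_
        rw [Finset.sum_const, hc𝒟 B hB, nsmul_eq_mul]
      rw [Finset.sum_congr rfl e1, Finset.sum_add_distrib, hsym, e2, ← Finset.mul_sum]
      ring
    rw [hL] at h1
    rw [hR] at h1
    exact h1
  -- assemble
  have hfA : γ * f S ≤ f A := hApx S (fun i => (hS i).2)
  have hfS : 0 ≤ f S := hf_nonneg S
  rw [le_div_iff₀ (by exact_mod_cast h𝒞cardpos)]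
  have hcr : (0:ℝ) < (c : ℝ) := by exact_mod_cast hcpos
  have hcard : (0:ℝ) ≤ (𝒞.card : ℝ) := Nat.cast_nonneg _
  have key2 : (𝒞.card : ℝ) * f A
      ≤ 2 * ∑ B ∈ 𝒞, f (A ∪ Finset.univ.biUnion fun i => B i) := by
    have := key
    nlinarith [key]
  nlinarith [mul_le_mul_of_nonneg_right hfA hcard]
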